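/- In the setup X, Y, Z with Y = αX + ε_Y, Z = δY + ε_Z (errors independent of X and each other, mean zero, Var(ε_Y) > 0, Var(ε_Z) > 0, δ ≠ 0, α ≠ 0), the correction factor c = (σ²_X/σ²_{X·Z})·(σ²_{Y·Z}/σ²_Y) satisfies c = (σ²_Z − σ²_Y δ²)/(σ²_Z − σ²_X α² δ²) and 0 < c < 1; in particular sign(r_{YX·Z}) = sign(α). -/

import Mathlib

open MeasureTheory ProbabilityTheory

/-- Covariance of two real random variables. -/
noncomputable def cov {Ω : Type*} [MeasurableSpace Ω] (μ : MeasureTheory.Measure Ω)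
    (f g : Ω → ℝ) : ℝ :=
  ∫ ω, (f ω - ∫ x, f x ∂μ) * (g ω - ∫ x, g x ∂μ) ∂μ

/-- Partial covariance given `Z`: `σ_{AB·Z} = Cov(A,B) − Cov(A,Z)Cov(Z,B)/Var(Z)`. -/
noncomputable def pcov {Ω : Type*} [MeasurableSpace Ω] (μ : MeasureTheory.Measure Ω)
    (f g z : Ω → ℝ) : ℝ :=
  cov μ f g - cov μ f z * cov μ z g / cov μ z z

lemma myIntMul {Ω : Type*} [MeasurableSpace Ω] {μ : Measure Ω} {f g : Ω → ℝ}
    (hf : MemLp f 2 μ) (hg : MemLp g 2 μ) :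
    Integrable (fun ω => f ω * g ω) μ := by
  refine Integrable.mono' ((hf.integrable_sq.add hg.integrable_sq).div_const 2)
    (hf.aestronglyMeasurable.mul hg.aestronglyMeasurable) ?_
  refine Filter.Eventually.of_forall fun ω => ?_
  simp only [Pi.add_apply, Real.norm_eq_abs, abs_mul]
  nlinarith [sq_nonneg (|f ω| - |g ω|), sq_abs (f ω), sq_abs (g ω), abs_nonneg (f ω), abs_nonneg (g ω)]

lemma myCovEq {Ω : Type*} [MeasurableSpace Ω] {μ : Measure Ω} [IsProbabilityMeasure μ]
    {f g : Ω → ℝ} (hf : MemLp f 2 μ) (hg : MemLp g 2 μ) :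
    cov μ f g = (∫ ω, f ω * g ω ∂μ) - (∫ ω, f ω ∂μ) * (∫ ω, g ω ∂μ) := by
  unfold cov
  have hfg := myIntMul hf hg
  have hfi := hf.integrable one_le_two
  have hgi := hg.integrable one_le_two
  have e : ∀ ω, (f ω - ∫ x, f x ∂μ) * (g ω - ∫ x, g x ∂μ)
      = f ω * g ω - (∫ x, f x ∂μ) * g ω - (∫ x, g x ∂μ) * f ω
        + (∫ x, f x ∂μ) * (∫ x, g x ∂μ) := fun ω => by ring
  simp_rw [e]
  have h1 : Integrable (fun ω => f ω * g ω - (∫ x, f x ∂μ) * g ω) μ := hfg.sub (hgi.const_mul _)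
  have h2 : Integrable (fun ω => f ω * g ω - (∫ x, f x ∂μ) * g ω - (∫ x, g x ∂μ) * f ω) μ :=
    h1.sub (hfi.const_mul _)
  rw [integral_add h2 (integrable_const _), integral_sub h1 (hfi.const_mul _),
    integral_sub hfg (hgi.const_mul _), MeasureTheory.integral_const_mul,
    MeasureTheory.integral_const_mul, integral_const]
  simp [measure_univ]
  ring

lemma myKey {Ω : Type*} [MeasurableSpace Ω] {μ : Measure Ω}
    {X eY eZ : Ω → ℝ}
    (hX2 : MemLp X 2 μ) (heY2 : MemLp eY 2 μ) (heZ2 : MemLp eZ 2 μ)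
    (oXY : ∫ ω, X ω * eY ω ∂μ = 0) (oXZ : ∫ ω, X ω * eZ ω ∂μ = 0)
    (oYZ : ∫ ω, eY ω * eZ ω ∂μ = 0)
    (p q r s t u : ℝ) :
    ∫ ω, (p * X ω + q * eY ω + r * eZ ω) * (s * X ω + t * eY ω + u * eZ ω) ∂μ
      = p * s * (∫ ω, X ω * X ω ∂μ) + q * t * (∫ ω, eY ω * eY ω ∂μ)
        + r * u * (∫ ω, eZ ω * eZ ω ∂μ) := by
  have iXX := myIntMul hX2 hX2
  have iYY := myIntMul heY2 heY2
  have iZZ := myIntMul heZ2 heZ2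
  have iXY := myIntMul hX2 heY2
  have iXZ := myIntMul hX2 heZ2
  have iYZ := myIntMul heY2 heZ2
  have e : ∀ ω, (p * X ω + q * eY ω + r * eZ ω) * (s * X ω + t * eY ω + u * eZ ω)
      = (p * s) * (X ω * X ω) + (q * t) * (eY ω * eY ω) + (r * u) * (eZ ω * eZ ω)
        + (p * t + q * s) * (X ω * eY ω) + (p * u + r * s) * (X ω * eZ ω)
        + (q * u + r * t) * (eY ω * eZ ω) := fun ω => by ring
  simp_rw [e]
  have h1 : Integrable (fun ω => (p * s) * (X ω * X ω) + (q * t) * (eY ω * eY ω)) μ :=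
    (iXX.const_mul _).add (iYY.const_mul _)
  have h2 : Integrable (fun ω => (p * s) * (X ω * X ω) + (q * t) * (eY ω * eY ω)
      + (r * u) * (eZ ω * eZ ω)) μ := h1.add (iZZ.const_mul _)
  have h3 : Integrable (fun ω => (p * s) * (X ω * X ω) + (q * t) * (eY ω * eY ω)
      + (r * u) * (eZ ω * eZ ω) + (p * t + q * s) * (X ω * eY ω)) μ := h2.add (iXY.const_mul _)
  have h4 : Integrable (fun ω => (p * s) * (X ω * X ω) + (q * t) * (eY ω * eY ω)
      + (r * u) * (eZ ω * eZ ω) + (p * t + q * s) * (X ω * eY ω)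
      + (p * u + r * s) * (X ω * eZ ω)) μ := h3.add (iXZ.const_mul _)
  rw [integral_add h4 (iYZ.const_mul _), integral_add h3 (iXZ.const_mul _),
    integral_add h2 (iXY.const_mul _), integral_add h1 (iZZ.const_mul _),
    integral_add (iXX.const_mul _) (iYY.const_mul _)]
  simp_rw [MeasureTheory.integral_const_mul]
  rw [oXY, oXZ, oYZ]
  ring


/-- In the setup `Y = αX + ε_Y`, `Z = δY + ε_Z` (mutually independent mean-zero
errors, `Var(ε_Y) > 0`, `Var(ε_Z) > 0`, `δ ≠ 0`, `α ≠ 0`), the correction factor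
`c = (σ²_X/σ²_{X·Z})·(σ²_{Y·Z}/σ²_Y)` satisfies
`c = (σ²_Z − σ²_Y δ²)/(σ²_Z − σ²_X α² δ²)` and `0 < c < 1`; in particular
`sign(r_{YX·Z}) = sign(α)`. -/
theorem stmt_10 {Ω : Type*} [MeasurableSpace Ω] (μ : MeasureTheory.Measure Ω)
    [IsProbabilityMeasure μ]
    (X eY eZ Y Z : Ω → ℝ) (α δ : ℝ) (hα : α ≠ 0) (hδ : δ ≠ 0)
    (hY : Y = fun ω => α * X ω + eY ω)
    (hZ : Z = fun ω => δ * Y ω + eZ ω)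
    (hX2 : MemLp X 2 μ) (heY2 : MemLp eY 2 μ) (heZ2 : MemLp eZ 2 μ)
    (hindep : iIndepFun ![X, eY, eZ] μ)
    (hmX : ∫ ω, X ω ∂μ = 0) (hmY : ∫ ω, eY ω ∂μ = 0) (hmZ : ∫ ω, eZ ω ∂μ = 0)
    (hvX : 0 < cov μ X X) (hveY : 0 < cov μ eY eY) (hveZ : 0 < cov μ eZ eZ)
    (hvY : cov μ Y Y ≠ 0) (hvZ : cov μ Z Z ≠ 0) (hpX : pcov μ X X Z ≠ 0) :
    (cov μ X X / pcov μ X X Z) * (pcov μ Y Y Z / cov μ Y Y) =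
      (cov μ Z Z - cov μ Y Y * δ ^ 2) / (cov μ Z Z - cov μ X X * α ^ 2 * δ ^ 2) ∧
    0 < (cov μ X X / pcov μ X X Z) * (pcov μ Y Y Z / cov μ Y Y) ∧
    (cov μ X X / pcov μ X X Z) * (pcov μ Y Y Z / cov μ Y Y) < 1 ∧
    Real.sign (pcov μ X Y Z / pcov μ X X Z) = Real.sign α := by
  -- pairwise independence and orthogonality
  have indXY : IndepFun X eY μ := by
    simpa using hindep.indepFun (show (0 : Fin 3) ≠ 1 by decide)
  have indXZ : IndepFun X eZ μ := by
    simpa using hindep.indepFun (show (0 : Fin 3) ≠ 2 by decide)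
  have indYZ : IndepFun eY eZ μ := by
    simpa using hindep.indepFun (show (1 : Fin 3) ≠ 2 by decide)
  have oXY : ∫ ω, X ω * eY ω ∂μ = 0 := by
    rw [indXY.integral_fun_mul_eq_mul_integral hX2.aestronglyMeasurable heY2.aestronglyMeasurable, hmX, zero_mul]
  have oXZ : ∫ ω, X ω * eZ ω ∂μ = 0 := by
    rw [indXZ.integral_fun_mul_eq_mul_integral hX2.aestronglyMeasurable heZ2.aestronglyMeasurable, hmX, zero_mul]
  have oYZ : ∫ ω, eY ω * eZ ω ∂μ = 0 := by
    rw [indYZ.integral_fun_mul_eq_mul_integral heY2.aestronglyMeasurable heZ2.aestronglyMeasurable, hmY, zero_mul]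
  -- moments of Y and Z
  have hY2 : MemLp Y 2 μ := by rw [hY]; exact (hX2.const_mul α).add heY2
  have hZ2 : MemLp Z 2 μ := by rw [hZ]; exact (hY2.const_mul δ).add heZ2
  have mY : ∫ ω, Y ω ∂μ = 0 := by
    rw [hY, integral_add ((hX2.integrable one_le_two).const_mul α) (heY2.integrable one_le_two),
      MeasureTheory.integral_const_mul, hmX, hmY]; ring
  have mZ : ∫ ω, Z ω ∂μ = 0 := by
    rw [hZ, integral_add ((hY2.integrable one_le_two).const_mul δ) (heZ2.integrable one_le_two),
      MeasureTheory.integral_const_mul, mY, hmZ]; ring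
  set A := ∫ ω, X ω * X ω ∂μ with hAdef
  set B := ∫ ω, eY ω * eY ω ∂μ with hBdef
  set C := ∫ ω, eZ ω * eZ ω ∂μ with hCdef
  have key := myKey hX2 heY2 heZ2 oXY oXZ oYZ
  have eY' : ∀ ω, Y ω = α * X ω + 1 * eY ω + 0 * eZ ω := by intro ω; rw [hY]; ring
  have eZ' : ∀ ω, Z ω = (δ * α) * X ω + δ * eY ω + 1 * eZ ω := by intro ω; rw [hZ, hY]; ring
  have eX' : ∀ ω, X ω = 1 * X ω + 0 * eY ω + 0 * eZ ω := by intro ω; ring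
  have cXX : cov μ X X = A := by
    rw [myCovEq hX2 hX2, hmX, hAdef]; ring
  have cB : cov μ eY eY = B := by
    rw [myCovEq heY2 heY2, hmY, hBdef]; ring
  have cC : cov μ eZ eZ = C := by
    rw [myCovEq heZ2 heZ2, hmZ, hCdef]; ring
  have cYY : cov μ Y Y = α ^ 2 * A + B := by
    rw [myCovEq hY2 hY2, mY]
    rw [show (fun ω => Y ω * Y ω)
        = fun ω => (α * X ω + 1 * eY ω + 0 * eZ ω) * (α * X ω + 1 * eY ω + 0 * eZ ω) from
      funext fun ω => by rw [eY' ω], key α 1 0 α 1 0]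
    ring
  have cZZ : cov μ Z Z = δ ^ 2 * (α ^ 2 * A + B) + C := by
    rw [myCovEq hZ2 hZ2, mZ]
    rw [show (fun ω => Z ω * Z ω)
        = fun ω => ((δ * α) * X ω + δ * eY ω + 1 * eZ ω) * ((δ * α) * X ω + δ * eY ω + 1 * eZ ω)
        from funext fun ω => by rw [eZ' ω], key (δ * α) δ 1 (δ * α) δ 1]
    ring
  have cXY : cov μ X Y = α * A := by
    rw [myCovEq hX2 hY2, hmX]
    rw [show (fun ω => X ω * Y ω)
        = fun ω => (1 * X ω + 0 * eY ω + 0 * eZ ω) * (α * X ω + 1 * eY ω + 0 * eZ ω)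
        from funext fun ω => by rw [eY' ω, eX' ω]; try ring, key 1 0 0 α 1 0]
    ring
  have cXZ : cov μ X Z = α * δ * A := by
    rw [myCovEq hX2 hZ2, hmX]
    rw [show (fun ω => X ω * Z ω)
        = fun ω => (1 * X ω + 0 * eY ω + 0 * eZ ω) * ((δ * α) * X ω + δ * eY ω + 1 * eZ ω)
        from funext fun ω => by rw [eZ' ω, eX' ω]; try ring, key 1 0 0 (δ * α) δ 1]
    ring
  have cZX : cov μ Z X = α * δ * A := by
    rw [myCovEq hZ2 hX2, hmX]
    rw [show (fun ω => Z ω * X ω)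
        = fun ω => ((δ * α) * X ω + δ * eY ω + 1 * eZ ω) * (1 * X ω + 0 * eY ω + 0 * eZ ω)
        from funext fun ω => by rw [eZ' ω, eX' ω]; try ring, key (δ * α) δ 1 1 0 0]
    ring
  have cYZ : cov μ Y Z = δ * (α ^ 2 * A + B) := by
    rw [myCovEq hY2 hZ2, mY]
    rw [show (fun ω => Y ω * Z ω)
        = fun ω => (α * X ω + 1 * eY ω + 0 * eZ ω) * ((δ * α) * X ω + δ * eY ω + 1 * eZ ω)
        from funext fun ω => by rw [eZ' ω, eY' ω]; try ring, key α 1 0 (δ * α) δ 1]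
    ring
  have cZY : cov μ Z Y = δ * (α ^ 2 * A + B) := by
    rw [myCovEq hZ2 hY2, mY]
    rw [show (fun ω => Z ω * Y ω)
        = fun ω => ((δ * α) * X ω + δ * eY ω + 1 * eZ ω) * (α * X ω + 1 * eY ω + 0 * eZ ω)
        from funext fun ω => by rw [eZ' ω, eY' ω]; try ring, key (δ * α) δ 1 α 1 0]
    ring
  -- positivity
  clear_value A B C
  have hA : 0 < A := cXX ▸ hvX
  have hB : 0 < B := cB ▸ hveY
  have hC : 0 < C := cC ▸ hveZ
  have hδ2 : 0 < δ ^ 2 := lt_of_le_of_ne (sq_nonneg δ) (Ne.symm (pow_ne_zero 2 hδ))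
  have hα2 : 0 < α ^ 2 := lt_of_le_of_ne (sq_nonneg α) (Ne.symm (pow_ne_zero 2 hα))
  have hvYY : 0 < α ^ 2 * A + B := by positivity
  have hD : 0 < δ ^ 2 * (α ^ 2 * A + B) + C := by positivity
  have hE : 0 < δ ^ 2 * B + C := by positivity
  -- pcov values
  have pXXZ : pcov μ X X Z = A * (δ ^ 2 * B + C) / (δ ^ 2 * (α ^ 2 * A + B) + C) := by
    rw [pcov, cXX, cXZ, cZX, cZZ]; field_simp; ring
  have pYYZ : pcov μ Y Y Z = (α ^ 2 * A + B) * C / (δ ^ 2 * (α ^ 2 * A + B) + C) := by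
    rw [pcov, cYY, cYZ, cZY, cZZ]; field_simp; ring
  have pXYZ : pcov μ X Y Z = α * A * C / (δ ^ 2 * (α ^ 2 * A + B) + C) := by
    rw [pcov, cXY, cXZ, cZY, cZZ]; field_simp; ring
  have hc : (cov μ X X / pcov μ X X Z) * (pcov μ Y Y Z / cov μ Y Y) = C / (δ ^ 2 * B + C) := by
    rw [cXX, cYY, pXXZ, pYYZ]
    field_simp
  have hr : pcov μ X Y Z / pcov μ X X Z = α * (C / (δ ^ 2 * B + C)) := by
    rw [pXYZ, pXXZ]
    field_simp
  have hpos : 0 < C / (δ ^ 2 * B + C) := by positivity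
  refine ⟨?_, ?_, ?_, ?_⟩
  · rw [hc, cZZ, cYY, cXX,
      show δ ^ 2 * (α ^ 2 * A + B) + C - (α ^ 2 * A + B) * δ ^ 2 = C by ring,
      show δ ^ 2 * (α ^ 2 * A + B) + C - A * α ^ 2 * δ ^ 2 = δ ^ 2 * B + C by ring]
  · rw [hc]; exact hpos
  · rw [hc, div_lt_one hE]
    have := mul_pos hδ2 hB
    linarith
  · rw [hr]
    rcases lt_trichotomy α 0 with h | h | h
    · rw [Real.sign_of_neg (mul_neg_of_neg_of_pos h hpos), Real.sign_of_neg h]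
    · exact absurd h hα
    · rw [Real.sign_of_pos (mul_pos h hpos), Real.sign_of_pos h]
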